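/- Let g : [a,b] → ℝ≥0 be a concave function with g(b) = 0. Then ∫_a^b (b-x)·g(x) dx ≤ (2(b-a)/3) · ∫_a^b g(x) dx. -/

import Mathlib

open MeasureTheory Set

theorem integral_weighted_concave_bound (a b : ℝ) (hab : a < b) (g : ℝ → ℝ)
    (hg0 : ∀ x ∈ Icc a b, 0 ≤ g x)
    (hgc : ConcaveOn ℝ (Icc a b) g)
    (hgb : g b = 0)
    (hgi : IntervalIntegrable g volume a b)
    (hwgi : IntervalIntegrable (fun x => (b - x) * g x) volume a b) :
    (∫ x in a..b, (b - x) * g x) ≤ (2 * (b - a) / 3) * ∫ x in a..b, g x := by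
  set m : ℝ := (2*a + b)/3 with hm
  have ham : a < m := by rw [hm]; linarith
  have hmb : m < b := by rw [hm]; linarith
  have hmI : m ∈ Icc a b := ⟨ham.le, hmb.le⟩
  have hbI : b ∈ Icc a b := ⟨hab.le, le_rfl⟩
  have hbm : (0:ℝ) < b - m := by linarith
  set c : ℝ := g m / (b - m) with hc
  have hgm : 0 ≤ g m := hg0 m hmI
  have hc0 : 0 ≤ c := div_nonneg hgm hbm.le
  have key : ∀ x ∈ Icc a b, (m - x) * g x ≤ (m - x) * (c * (b - x)) := by
    intro x hx
    rcases lt_trichotomy x m with h | h | h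
    · have hbx : (0:ℝ) < b - x := by linarith
      have ht : (0:ℝ) ≤ (b - m)/(b - x) := by positivity
      have hs : (0:ℝ) ≤ (m - x)/(b - x) := by
        apply div_nonneg <;> linarith
      have hts : (b - m)/(b - x) + (m - x)/(b - x) = 1 := by
        field_simp
        ring
      have hcomb := hgc.2 hx hbI ht hs hts
      have hpt : ((b - m)/(b - x)) • x + ((m - x)/(b - x)) • b = m := by
        simp only [smul_eq_mul]; field_simp; ring
      rw [hpt] at hcomb
      simp only [smul_eq_mul, hgb, mul_zero, add_zero] at hcomb
      -- hcomb : (b - m)/(b - x) * g x ≤ g m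
      have hgx : g x ≤ c * (b - x) := by
        rw [hc]
        rw [div_mul_eq_mul_div, le_div_iff₀ hbm]
        calc g x * (b - m) = ((b - m)/(b - x) * g x) * (b - x) := by
              field_simp
        _ ≤ g m * (b - x) := by
              apply mul_le_mul_of_nonneg_right hcomb hbx.le
      have : 0 ≤ m - x := by linarith
      exact mul_le_mul_of_nonneg_left hgx this
    · rw [h]; simp
    · have ht : (0:ℝ) ≤ (b - x)/(b - m) := by
        apply div_nonneg <;> linarith [hx.2]
      have hs : (0:ℝ) ≤ (x - m)/(b - m) := by
        apply div_nonneg <;> linarith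
      have hts : (b - x)/(b - m) + (x - m)/(b - m) = 1 := by
        field_simp
        ring
      have hcomb := hgc.2 hmI hbI ht hs hts
      have hpt : ((b - x)/(b - m)) • m + ((x - m)/(b - m)) • b = x := by
        simp only [smul_eq_mul]; field_simp; ring
      rw [hpt] at hcomb
      simp only [smul_eq_mul, hgb, mul_zero, add_zero] at hcomb
      -- hcomb : (b - x)/(b - m) * g m ≤ g x
      have hgx : c * (b - x) ≤ g x := by
        calc c * (b - x) = (b - x)/(b - m) * g m := by rw [hc]; ring
        _ ≤ g x := hcomb
      have hneg : m - x ≤ 0 := by linarith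
      exact mul_le_mul_of_nonpos_left hgx hneg
  have hint1 : IntervalIntegrable (fun x => (m - x) * g x) volume a b := by
    have h := hwgi.sub (hgi.const_mul (b - m))
    have he : (fun x => (b - x) * g x - (b - m) * g x) = fun x => (m - x) * g x := by
      funext x; ring
    rwa [he] at h
  have hint2 : IntervalIntegrable (fun x => (m - x) * (c * (b - x))) volume a b := by
    apply Continuous.intervalIntegrable
    continuity
  have hmono : (∫ x in a..b, (m - x) * g x) ≤ ∫ x in a..b, (m - x) * (c * (b - x)) :=
    intervalIntegral.integral_mono_on hab.le hint1 hint2 key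
  have hpoly : (∫ x in a..b, (m - x) * (b - x)) = 0 := by
    have hF : ∀ x ∈ Set.uIcc a b, HasDerivAt (fun t => m*b*t - (m+b)*t^2/2 + t^3/3)
        ((m - x) * (b - x)) x := by
      intro x _
      have h1 := (((hasDerivAt_id x).const_mul (m*b)).sub
        (((hasDerivAt_pow 2 x).const_mul (m+b)).div_const 2)).add
        ((hasDerivAt_pow 3 x).div_const 3)
      simp only [id_eq] at h1
      refine h1.congr_deriv ?_
      push_cast
      ring
    have := intervalIntegral.integral_eq_sub_of_hasDerivAt hF
      (by apply Continuous.intervalIntegrable; continuity)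
    rw [this, hm]; ring
  have hI0 : (∫ x in a..b, (m - x) * (c * (b - x))) = 0 := by
    have he : (fun x => (m - x) * (c * (b - x))) = fun x => c * ((m - x) * (b - x)) := by
      funext x; ring
    rw [he, intervalIntegral.integral_const_mul, hpoly, mul_zero]
  have hsplit : (∫ x in a..b, (b - x) * g x)
      = (∫ x in a..b, (m - x) * g x) + (b - m) * ∫ x in a..b, g x := by
    rw [← intervalIntegral.integral_const_mul,
      ← intervalIntegral.integral_add hint1 (hgi.const_mul _)]
    congr 1; funext x; ring
  have hbmval : b - m = 2 * (b - a) / 3 := by rw [hm]; ring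
  rw [hsplit, hbmval] at *
  linarith [hmono, hI0]
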